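/- Fix integers m ≥ 1 and k_1, ..., k_m with each k_i ≥ 2, and set n = k_1 + ... + k_m. Then the graph D_n(k_1, ..., k_m) is well-covered; moreover every maximal independent set of D_n(k_1, ..., k_m) has cardinality 2n. -/

import Mathlib

open scoped Classical

variable {V : Type*}

/-- `S` is an independent set of the induced subgraph of `G` on the vertex set `A`. -/
def IsIndepIn (G : SimpleGraph V) (A S : Finset V) : Prop :=
  S ⊆ A ∧ ∀ u ∈ S, ∀ v ∈ S, ¬ G.Adj u v

/-- `S` is a maximal independent set of the induced subgraph of `G` on the vertex set `A`. -/
def IsMaxIndepIn (G : SimpleGraph V) (A S : Finset V) : Prop :=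
  IsIndepIn G A S ∧ ∀ T, IsIndepIn G A T → S ⊆ T → T = S

/-- The induced subgraph of `G` on the vertex set `A` is well-covered: all of its
maximal independent sets have the same cardinality. -/
def WellCoveredOn (G : SimpleGraph V) (A : Finset V) : Prop :=
  ∀ S T, IsMaxIndepIn G A S → IsMaxIndepIn G A T → S.card = T.card

/-- The closed neighbourhood of `x` deleted from `A`: the vertices of `A` distinct from `x`
and not adjacent to `x`. -/
noncomputable def delClosedNbhd (G : SimpleGraph V) (A : Finset V) (x : V) : Finset V :=
  A.filter fun y => y ≠ x ∧ ¬ G.Adj x y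

/-- The induced subgraph of `G` on the vertex set `A` is vertex decomposable: it is
well-covered, and either it has no edges, or some vertex `x ∈ A` is such that deleting `x`,
respectively the closed neighbourhood of `x`, leaves a vertex decomposable graph. -/
def VertexDecomposableOn (G : SimpleGraph V) (A : Finset V) : Prop :=
  WellCoveredOn G A ∧
    ((∀ u ∈ A, ∀ v ∈ A, ¬ G.Adj u v) ∨
      ∃ x, ∃ _h : x ∈ A,
        VertexDecomposableOn G (A.erase x) ∧
        VertexDecomposableOn G (delClosedNbhd G A x))
termination_by A.card
decreasing_by
  · exact Finset.card_erase_lt_of_mem (by assumption)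
  · exact Finset.card_lt_card
      (Finset.filter_ssubset.mpr ⟨x, by assumption, by simp⟩)

/-- A finite simple graph is well-covered if all of its maximal independent sets have the
same cardinality. -/
def WellCovered (G : SimpleGraph V) [Fintype V] : Prop :=
  WellCoveredOn G Finset.univ

/-- A finite simple graph is vertex decomposable. -/
def VertexDecomposable (G : SimpleGraph V) [Fintype V] : Prop :=
  VertexDecomposableOn G Finset.univ

/-- The set of shedding vertices of `G` : those vertices `x` such that both `G \ x` and
`G \ N[x]` are vertex decomposable. -/
def Shed (G : SimpleGraph V) [Fintype V] : Set V :=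
  {x | VertexDecomposableOn G (Finset.univ.erase x) ∧
       VertexDecomposableOn G (delClosedNbhd G Finset.univ x)}

/-- `D` is a dominating set of `G`: every vertex not in `D` is adjacent to a vertex of `D`. -/
def IsDominatingSet (G : SimpleGraph V) (D : Set V) : Prop :=
  ∀ v, v ∉ D → ∃ u ∈ D, G.Adj u v

/-- A vertex is simplicial if its neighbourhood induces a clique. -/
def IsSimplicialVertex (G : SimpleGraph V) (x : V) : Prop :=
  ∀ u v, G.Adj x u → G.Adj x v → u ≠ v → G.Adj u v

/-- The (0-indexed) vertices `a` and `b` of `X` lie in the same complete bipartite block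
`K_{k i, k i}`: block `i` occupies the indices in `[2 * (k 0 + ⋯ + k (i-1)), 2 * (k 0 + ⋯ + k i))`. -/
def SameBlock (m : ℕ) (k : ℕ → ℕ) (a b : ℕ) : Prop :=
  ∃ i < m, 2 * (∑ j ∈ Finset.range i, k j) ≤ a ∧ a < 2 * (∑ j ∈ Finset.range (i + 1), k j) ∧
           2 * (∑ j ∈ Finset.range i, k j) ≤ b ∧ b < 2 * (∑ j ∈ Finset.range (i + 1), k j)

/-- The graph `D_n(k 0, …, k (m-1))` on the `5n` vertices `X ⊕ Y ⊕ Z` (all 0-indexed, so the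
paper's `x_j` is `Sum.inl (j-1)`, `y_j` is `Sum.inr (Sum.inl (j-1))` and `z_j` is
`Sum.inr (Sum.inr (j-1))`).  Its edges are exactly: `Z` induces a complete graph `K n`;
`Y` is independent; `X` induces the disjoint union `K_{k 0,k 0} ⊔ ⋯ ⊔ K_{k (m-1),k (m-1)}`,
where within each block the bipartition is by the parity of the index; `x_j` is adjacent to
`y_j`; and `z_c` is adjacent to `y_{2c}` and `y_{2c+1}`. -/
def Dgraph (m : ℕ) (k : ℕ → ℕ) (n : ℕ) :
    SimpleGraph (Fin (2 * n) ⊕ Fin (2 * n) ⊕ Fin n) :=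
  SimpleGraph.fromRel fun p q =>
    match p, q with
    | Sum.inl a, Sum.inl b => SameBlock m k a.val b.val ∧ a.val % 2 ≠ b.val % 2
    | Sum.inl a, Sum.inr (Sum.inl b) => a.val = b.val
    | Sum.inr (Sum.inr c), Sum.inr (Sum.inl b) => b.val = 2 * c.val ∨ b.val = 2 * c.val + 1
    | Sum.inr (Sum.inr c), Sum.inr (Sum.inr d) => c ≠ d
    | _, _ => False


variable {m n : ℕ} {k : ℕ → ℕ}

lemma adjXY_iff (a b : Fin (2*n)) : (Dgraph m k n).Adj (.inl a) (.inr (.inl b)) ↔ a = b := by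
  simp [Dgraph, SimpleGraph.fromRel_adj, Fin.ext_iff]

lemma adjZY_iff (c : Fin n) (b : Fin (2*n)) :
    (Dgraph m k n).Adj (.inr (.inr c)) (.inr (.inl b)) ↔ b.val = 2*c.val ∨ b.val = 2*c.val+1 := by
  simp [Dgraph, SimpleGraph.fromRel_adj]

lemma adjZZ_iff (c d : Fin n) : (Dgraph m k n).Adj (.inr (.inr c)) (.inr (.inr d)) ↔ c ≠ d := by
  simp [Dgraph, SimpleGraph.fromRel_adj]; tauto

lemma notAdjYY (a b : Fin (2*n)) : ¬ (Dgraph m k n).Adj (.inr (.inl a)) (.inr (.inl b)) := by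
  simp [Dgraph, SimpleGraph.fromRel_adj]

lemma notAdjXZ (a : Fin (2*n)) (c : Fin n) : ¬ (Dgraph m k n).Adj (.inl a) (.inr (.inr c)) := by
  simp [Dgraph, SimpleGraph.fromRel_adj]

lemma adjXX_iff (a b : Fin (2*n)) :
    (Dgraph m k n).Adj (.inl a) (.inl b) ↔ SameBlock m k a.val b.val ∧ a.val % 2 ≠ b.val % 2 := by
  constructor
  · intro h
    rw [Dgraph, SimpleGraph.fromRel_adj] at h
    rcases h.2 with ⟨h1, h2⟩ | ⟨h1, h2⟩
    · exact ⟨h1, h2⟩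
    · refine ⟨?_, fun e => h2 e.symm⟩
      obtain ⟨i, hi, h3, h4, h5, h6⟩ := h1
      exact ⟨i, hi, h5, h6, h3, h4⟩
  · rintro ⟨h1, h2⟩
    rw [Dgraph, SimpleGraph.fromRel_adj]
    exact ⟨by simp [Fin.ext_iff]; omega, Or.inl ⟨h1, h2⟩⟩
lemma exists_block {c : ℕ} (hc : c < ∑ i ∈ Finset.range m, k i) :
    ∃ i < m, (∑ j ∈ Finset.range i, k j) ≤ c ∧ c < ∑ j ∈ Finset.range (i+1), k j := by
  induction m with
  | zero => simp at hc
  | succ m ih =>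
    by_cases h : c < ∑ i ∈ Finset.range m, k i
    · obtain ⟨i, hi, h1, h2⟩ := ih h
      exact ⟨i, Nat.lt_succ_of_lt hi, h1, h2⟩
    · exact ⟨m, Nat.lt_succ_self m, Nat.le_of_not_lt h, hc⟩

lemma sameBlock_of_half {c : ℕ} (hc : c < ∑ i ∈ Finset.range m, k i) :
    SameBlock m k (2*c) (2*c+1) := by
  obtain ⟨i, hi, h1, h2⟩ := exists_block hc
  exact ⟨i, hi, by omega, by omega, by omega, by omega⟩

lemma sameBlock_glue {c a b : ℕ} (h1 : SameBlock m k (2*c) b) (h2 : SameBlock m k (2*c+1) a) :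
    SameBlock m k a b := by
  obtain ⟨i, hi, p1, p2, p3, p4⟩ := h1
  obtain ⟨i', hi', q1, q2, q3, q4⟩ := h2
  have hii : i = i' := by
    rcases Nat.lt_trichotomy i i' with h | h | h
    · have : (∑ j ∈ Finset.range (i+1), k j) ≤ ∑ j ∈ Finset.range i', k j :=
        Finset.sum_le_sum_of_subset (Finset.range_subset_range.mpr h)
      omega
    · exact h
    · have : (∑ j ∈ Finset.range (i'+1), k j) ≤ ∑ j ∈ Finset.range i, k j :=
        Finset.sum_le_sum_of_subset (Finset.range_subset_range.mpr h)
      omega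
  subst hii
  exact ⟨i, hi, q3, q4, p3, p4⟩

lemma max_dominating {W : Type*} [Fintype W] {G : SimpleGraph W} {S : Finset W}
    (h : IsMaxIndepIn G Finset.univ S) {v : W} (hv : v ∉ S) : ∃ u ∈ S, G.Adj u v := by
  by_contra hcon
  push_neg at hcon
  have hT : IsIndepIn G Finset.univ (insert v S) := by
    refine ⟨Finset.subset_univ _, ?_⟩
    intro a ha b hb
    rcases Finset.mem_insert.mp ha with ha' | ha'
    · rcases Finset.mem_insert.mp hb with hb' | hb'
      · subst ha'; subst hb'; exact G.loopless.irrefl _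
      · subst ha'; exact fun hadj => hcon b hb' hadj.symm
    · rcases Finset.mem_insert.mp hb with hb' | hb'
      · subst hb'; exact hcon a ha'
      · exact h.1.2 a ha' b hb'
  have := h.2 _ hT (Finset.subset_insert _ _)
  rw [← this] at hv
  exact hv (Finset.mem_insert_self _ _)

theorem statement12 (m : ℕ) (hm : 1 ≤ m) (k : ℕ → ℕ) (hk : ∀ i < m, 2 ≤ k i)
    (n : ℕ) (hn : n = ∑ i ∈ Finset.range m, k i) :
    WellCovered (Dgraph m k n) ∧
    ∀ S, IsMaxIndepIn (Dgraph m k n) Finset.univ S → S.card = 2 * n := by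
  have key : ∀ S, IsMaxIndepIn (Dgraph m k n) Finset.univ S → S.card = 2 * n := by
    intro S hS
    have hind := hS.1.2
    by_cases hz : ∃ c : Fin n, Sum.inr (Sum.inr c) ∈ S
    · -- Case B : some z_c ∈ S
      obtain ⟨c, hc⟩ := hz
      have hclt := c.isLt
      set ec : Fin (2*n) := ⟨2*c.val, by omega⟩ with hec
      set oc : Fin (2*n) := ⟨2*c.val+1, by omega⟩ with hoc
      have hne : ec ≠ oc := by simp [hec, hoc, Fin.ext_iff]
      have hYe : Sum.inr (Sum.inl ec) ∉ S :=
        fun h => hind _ hc _ h ((adjZY_iff c ec).mpr (Or.inl rfl))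
      have hYo : Sum.inr (Sum.inl oc) ∉ S :=
        fun h => hind _ hc _ h ((adjZY_iff c oc).mpr (Or.inr rfl))
      have hzz : ∀ d : Fin n, d ≠ c → Sum.inr (Sum.inr d) ∉ S :=
        fun d hd h => hind _ h _ hc ((adjZZ_iff d c).mpr hd)
      have h1 : ∀ j : Fin (2*n), j ≠ ec → j ≠ oc →
          (Sum.inl j ∈ S ∨ Sum.inr (Sum.inl j) ∈ S) := by
        intro j hj1 hj2
        by_contra hcon
        push_neg at hcon
        obtain ⟨u, hu, hadj⟩ := max_dominating hS hcon.2
        rcases u with a | b | d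
        · obtain rfl := (adjXY_iff a j).mp hadj
          exact hcon.1 hu
        · exact notAdjYY b j hadj
        · by_cases hd : d = c
          · subst hd
            rcases (adjZY_iff d j).mp hadj with h | h
            · exact hj1 (by simp [hec, Fin.ext_iff, h])
            · exact hj2 (by simp [hoc, Fin.ext_iff, h])
          · exact hzz d hd hu
      have hx : Sum.inl ec ∈ S ∨ Sum.inl oc ∈ S := by
        by_contra hcon
        push_neg at hcon
        obtain ⟨u, hu, hadju⟩ := max_dominating hS hcon.1
        obtain ⟨v, hv, hadjv⟩ := max_dominating hS hcon.2
        rcases u with b | b | d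
        · rcases v with a | a | d
          · obtain ⟨hb1, hb2⟩ := (adjXX_iff b ec).mp hadju
            obtain ⟨ha1, ha2⟩ := (adjXX_iff a oc).mp hadjv
            have hsbb : SameBlock m k (2*c.val) b.val := by
              obtain ⟨i, hi, p1, p2, p3, p4⟩ := hb1
              exact ⟨i, hi, p3, p4, p1, p2⟩
            have hsba : SameBlock m k (2*c.val+1) a.val := by
              obtain ⟨i, hi, p1, p2, p3, p4⟩ := ha1
              exact ⟨i, hi, p3, p4, p1, p2⟩
            have hab : (Dgraph m k n).Adj (Sum.inl a) (Sum.inl b) := by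
              refine (adjXX_iff a b).mpr ⟨sameBlock_glue hsbb hsba, ?_⟩
              simp only [hec] at hb2
              simp only [hoc] at ha2
              omega
            exact hind _ hv _ hu hab
          · obtain rfl := (adjXY_iff oc a).mp hadjv.symm
            exact hYo hv
          · exact notAdjXZ oc d hadjv.symm
        · obtain rfl := (adjXY_iff ec b).mp hadju.symm
          exact hYe hu
        · exact notAdjXZ ec d hadju.symm
      set g : Fin (2*n) → (Fin (2*n) ⊕ Fin (2*n) ⊕ Fin n) :=
        fun j => if j = ec then Sum.inr (Sum.inr c)
          else if j = oc then (if Sum.inl ec ∈ S then Sum.inl ec else Sum.inl oc)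
          else if Sum.inl j ∈ S then Sum.inl j else Sum.inr (Sum.inl j) with hg
      have hinj : Function.Injective g := by
        intro j j' h
        simp only [hg] at h
        split_ifs at h <;> simp_all [Fin.ext_iff] <;> omega
      have himg : S = Finset.image g Finset.univ := by
        ext s
        simp only [Finset.mem_image, Finset.mem_univ, true_and]
        constructor
        · intro hs
          rcases s with a | a | d
          · by_cases ha : a = ec
            · subst ha
              exact ⟨oc, by simp [hg, hne.symm, hs]⟩
            · by_cases ha2 : a = oc
              · subst ha2
                have hee : Sum.inl ec ∉ S := by
                  intro h
                  have : (Dgraph m k n).Adj (Sum.inl ec) (Sum.inl oc) := by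
                    refine (adjXX_iff ec oc).mpr ⟨?_, by simp [hec, hoc]⟩
                    have : c.val < ∑ i ∈ Finset.range m, k i := by omega
                    simpa [hec, hoc] using sameBlock_of_half this
                  exact hind _ h _ hs this
                exact ⟨oc, by simp [hg, hne.symm, hee]⟩
              · exact ⟨a, by simp [hg, ha, ha2, hs]⟩
          · have ha : a ≠ ec := fun h => hYe (h ▸ hs)
            have ha2 : a ≠ oc := fun h => hYo (h ▸ hs)
            have hxa : Sum.inl a ∉ S := fun h => hind _ h _ hs ((adjXY_iff a a).mpr rfl)
            exact ⟨a, by simp [hg, ha, ha2, hxa]⟩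
          · have hd : d = c := by
              by_contra hd
              exact hzz d hd hs
            subst hd
            exact ⟨ec, by simp [hg]⟩
        · rintro ⟨j, rfl⟩
          simp only [hg]
          split_ifs with h1' h2' h3' h4'
          · exact hc
          · exact h3'
          · exact hx.resolve_left h3'
          · exact h4'
          · exact (h1 j h1' h2').resolve_left h4'
      rw [himg, Finset.card_image_of_injective _ hinj, Finset.card_univ,
        Fintype.card_fin]
    · -- Case A : no z in S
      push_neg at hz
      have h1 : ∀ j : Fin (2*n), Sum.inl j ∈ S ∨ Sum.inr (Sum.inl j) ∈ S := by
        intro j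
        by_contra hcon
        push_neg at hcon
        obtain ⟨u, hu, hadj⟩ := max_dominating hS hcon.2
        rcases u with a | b | d
        · obtain rfl := (adjXY_iff a j).mp hadj
          exact hcon.1 hu
        · exact notAdjYY b j hadj
        · exact hz d hu
      set g : Fin (2*n) → (Fin (2*n) ⊕ Fin (2*n) ⊕ Fin n) :=
        fun j => if Sum.inl j ∈ S then Sum.inl j else Sum.inr (Sum.inl j) with hg
      have hinj : Function.Injective g := by
        intro j j' h
        simp only [hg] at h
        split_ifs at h <;>
          simp only [Sum.inl.injEq, Sum.inr.injEq, reduceCtorEq] at h <;>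
          first | exact h | exact h.elim
      have himg : S = Finset.image g Finset.univ := by
        ext s
        simp only [Finset.mem_image, Finset.mem_univ, true_and]
        constructor
        · intro hs
          rcases s with a | b | d
          · exact ⟨a, by simp [hg, hs]⟩
          · have hxb : Sum.inl b ∉ S := fun h => hind _ h _ hs ((adjXY_iff b b).mpr rfl)
            exact ⟨b, by simp [hg, hxb]⟩
          · exact absurd hs (hz d)
        · rintro ⟨j, rfl⟩
          simp only [hg]
          split_ifs with h
          · exact h
          · exact (h1 j).resolve_left h
      rw [himg, Finset.card_image_of_injective _ hinj, Finset.card_univ,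
        Fintype.card_fin]
  exact ⟨fun S T hS hT => by rw [key S hS, key T hT], key⟩
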